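/- Let 0 < α ≤ 1/4. Then there is a constant C such that for all k ≥ 1, all N ≥ 1, and all n ∈ ℤ, ∑_{n₁ + n₂ = n, |n₁|,|n₂| ≤ N} |φ(n₁) + φ(n₂)|^k ⟨n₁⟩^{-2α} ⟨n₂⟩^{-2α} ≤ C, with C independent of k, N and n. -/

import Mathlib

/-- The BBM Fourier multiplier symbol `φ(n) = -i n / (1 + n²)`. -/
noncomputable def phiSym (n : ℤ) : ℂ := (-Complex.I * (n : ℂ)) / (1 + (n : ℂ) ^ 2)

/-- The Japanese bracket `⟨n⟩ = √(1 + n²)`. -/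
noncomputable def jbr (n : ℤ) : ℝ := Real.sqrt (1 + (n : ℝ) ^ 2)

/-- The set of pairs `(n₁, n₂)` with `|n₁|, |n₂| ≤ N` and `n₁ + n₂ = n`. -/
noncomputable def pairSet (N : ℕ) (n : ℤ) : Finset (ℤ × ℤ) :=
  ((Finset.Icc (-(N : ℤ)) (N : ℤ)) ×ˢ (Finset.Icc (-(N : ℤ)) (N : ℤ))).filter
    (fun p => p.1 + p.2 = n)

lemma jbr_one_le (m : ℤ) : 1 ≤ jbr m := by
  unfold jbr
  have h := Real.sqrt_le_sqrt (show (1:ℝ) ≤ 1 + (m:ℝ)^2 by nlinarith)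
  rwa [Real.sqrt_one] at h

lemma jbr_pos (m : ℤ) : 0 < jbr m := lt_of_lt_of_le one_pos (jbr_one_le m)

lemma abs_le_jbr (m : ℤ) : |(m:ℝ)| ≤ jbr m := by
  unfold jbr
  rw [← Real.sqrt_sq_eq_abs]
  apply Real.sqrt_le_sqrt
  nlinarith

lemma jbr_sq (m : ℤ) : jbr m ^ 2 = 1 + (m:ℝ)^2 := by
  unfold jbr
  rw [Real.sq_sqrt]
  nlinarith [sq_nonneg ((m:ℝ))]

lemma phi_abs (m : ℤ) : ‖phiSym m‖ = |(m:ℝ)| / (1 + (m:ℝ)^2) := by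
  unfold phiSym
  have h : (1 + (m:ℂ)^2) = ((1 + (m:ℝ)^2 : ℝ) : ℂ) := by push_cast; ring
  have h2 : (-Complex.I * (m:ℂ)) = ((m:ℝ):ℂ) * (-Complex.I) := by push_cast; ring
  rw [h, h2, norm_div, norm_mul, Complex.norm_real, Complex.norm_real,
    norm_neg, Complex.norm_I, mul_one, Real.norm_eq_abs, Real.norm_eq_abs]
  congr 1
  exact abs_of_nonneg (by nlinarith [sq_nonneg ((m:ℝ))])

lemma phi_le_half (m : ℤ) : ‖phiSym m‖ ≤ 1 / 2 := by
  rw [phi_abs]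
  rw [div_le_div_iff₀ (by nlinarith [sq_nonneg ((m:ℝ))]) two_pos]
  nlinarith [sq_nonneg (|(m:ℝ)| - 1), sq_abs ((m:ℝ))]

lemma phi_le_inv_jbr (m : ℤ) : ‖phiSym m‖ ≤ (jbr m)⁻¹ := by
  rw [phi_abs]
  rw [div_le_iff₀ (by nlinarith [sq_nonneg ((m:ℝ))]), inv_mul_eq_div,
    le_div_iff₀ (jbr_pos m)]
  calc |(m:ℝ)| * jbr m ≤ jbr m * jbr m := by
        exact mul_le_mul_of_nonneg_right (abs_le_jbr m) (jbr_pos m).le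
    _ = 1 + (m:ℝ)^2 := by rw [← sq, jbr_sq]

/-- For `0 < α ≤ 1/4`, the sums
`∑_{n₁+n₂=n, |n₁|,|n₂| ≤ N} |φ(n₁)+φ(n₂)|^k ⟨n₁⟩^{-2α} ⟨n₂⟩^{-2α}` are bounded
uniformly in `k ≥ 1`, `N ≥ 1` and `n ∈ ℤ`. -/
theorem sum_phi_power_uniform_bound (α : ℝ) (hα₁ : 0 < α) (hα₂ : α ≤ 1 / 4) :
    ∃ C : ℝ, ∀ (k N : ℕ), 1 ≤ k → 1 ≤ N → ∀ n : ℤ,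
      ∑ p ∈ pairSet N n,
        ‖phiSym p.1 + phiSym p.2‖ ^ k
          * jbr p.1 ^ (-(2 * α)) * jbr p.2 ^ (-(2 * α)) ≤ C := by
  set p : ℝ := 1 + 2 * α with hp
  have hp1 : 1 < p := by rw [hp]; linarith
  have hg : Summable fun m : ℤ => |(m:ℝ)| ^ (-p) := Real.summable_abs_int_rpow hp1
  set f : ℤ → ℝ := fun m => jbr m ^ (-p) with hf
  have hfnn : ∀ m, 0 ≤ f m := fun m => Real.rpow_nonneg (jbr_pos m).le _
  set B : ℝ := 1 + ∑' m : ℤ, |(m:ℝ)| ^ (-p) with hB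
  -- uniform bound on ∑_{|m| ≤ N} f m
  have key : ∀ N : ℕ, 1 ≤ N → ∑ m ∈ Finset.Icc (-(N:ℤ)) (N:ℤ), f m ≤ B := by
    intro N hN
    have h0 : (0:ℤ) ∈ Finset.Icc (-(N:ℤ)) (N:ℤ) := by
      simp
    rw [← Finset.add_sum_erase _ f h0]
    have hf0 : f 0 = 1 := by
      simp [hf, jbr, Real.one_rpow]
    rw [hf0, hB]
    gcongr
    calc ∑ m ∈ (Finset.Icc (-(N:ℤ)) (N:ℤ)).erase 0, f m
        ≤ ∑ m ∈ (Finset.Icc (-(N:ℤ)) (N:ℤ)).erase 0, |(m:ℝ)| ^ (-p) := by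
          apply Finset.sum_le_sum
          intro m hm
          have hm0 : m ≠ 0 := Finset.ne_of_mem_erase hm
          have habs : (1:ℝ) ≤ |(m:ℝ)| := by
            rw [← Int.cast_abs]
            exact_mod_cast Int.one_le_abs hm0
          exact Real.rpow_le_rpow_of_nonpos (by linarith) (abs_le_jbr m)
            (by linarith)
      _ ≤ ∑' m : ℤ, |(m:ℝ)| ^ (-p) := by
          exact hg.sum_le_tsum _ (fun m _ => Real.rpow_nonneg (abs_nonneg _) _)
  refine ⟨2 * B, fun k N hk hN n => ?_⟩
  -- termwise bound
  have hterm : ∀ q ∈ pairSet N n,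
      ‖phiSym q.1 + phiSym q.2‖ ^ k
        * jbr q.1 ^ (-(2 * α)) * jbr q.2 ^ (-(2 * α)) ≤ f q.1 + f q.2 := by
    intro q _
    set a := ‖phiSym q.1 + phiSym q.2‖ with ha
    have ha0 : 0 ≤ a := norm_nonneg _
    have ha1 : a ≤ 1 := by
      calc a ≤ ‖phiSym q.1‖ + ‖phiSym q.2‖ :=
            norm_add_le _ _
        _ ≤ 1/2 + 1/2 := add_le_add (phi_le_half _) (phi_le_half _)
        _ = 1 := by norm_num
    have hak : a ^ k ≤ a := pow_le_of_le_one ha0 ha1 (by omega)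
    have haq : a ≤ (jbr q.1)⁻¹ + (jbr q.2)⁻¹ := by
      calc a ≤ ‖phiSym q.1‖ + ‖phiSym q.2‖ :=
            norm_add_le _ _
        _ ≤ _ := add_le_add (phi_le_inv_jbr _) (phi_le_inv_jbr _)
    have hj1 : (0:ℝ) < jbr q.1 := jbr_pos _
    have hj2 : (0:ℝ) < jbr q.2 := jbr_pos _
    have hb1 : jbr q.1 ^ (-(2*α)) ≤ 1 :=
      Real.rpow_le_one_of_one_le_of_nonpos (jbr_one_le _) (by linarith)
    have hb2 : jbr q.2 ^ (-(2*α)) ≤ 1 :=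
      Real.rpow_le_one_of_one_le_of_nonpos (jbr_one_le _) (by linarith)
    have hr1 : (0:ℝ) ≤ jbr q.1 ^ (-(2*α)) := Real.rpow_nonneg hj1.le _
    have hr2 : (0:ℝ) ≤ jbr q.2 ^ (-(2*α)) := Real.rpow_nonneg hj2.le _
    calc a ^ k * jbr q.1 ^ (-(2*α)) * jbr q.2 ^ (-(2*α))
        ≤ ((jbr q.1)⁻¹ + (jbr q.2)⁻¹) * jbr q.1 ^ (-(2*α)) * jbr q.2 ^ (-(2*α)) := by
          gcongr
          exact hak.trans haq
      _ = (jbr q.1)⁻¹ * jbr q.1 ^ (-(2*α)) * jbr q.2 ^ (-(2*α))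
            + (jbr q.2)⁻¹ * jbr q.2 ^ (-(2*α)) * jbr q.1 ^ (-(2*α)) := by ring
      _ ≤ (jbr q.1)⁻¹ * jbr q.1 ^ (-(2*α)) * 1
            + (jbr q.2)⁻¹ * jbr q.2 ^ (-(2*α)) * 1 := by
          gcongr <;> positivity
      _ = f q.1 + f q.2 := by
          simp only [hf, mul_one]
          rw [← Real.rpow_neg_one (jbr q.1), ← Real.rpow_neg_one (jbr q.2),
            ← Real.rpow_add hj1, ← Real.rpow_add hj2]
          norm_num [hp]
          ring_nf
  have hmem : ∀ q ∈ pairSet N n, q.1 ∈ Finset.Icc (-(N:ℤ)) (N:ℤ) ∧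
      q.2 ∈ Finset.Icc (-(N:ℤ)) (N:ℤ) ∧ q.1 + q.2 = n := by
    intro q hq
    simp only [pairSet, Finset.mem_filter, Finset.mem_product] at hq
    exact ⟨hq.1.1, hq.1.2, hq.2⟩
  have h1 : ∑ q ∈ pairSet N n, f q.1 ≤ B := by
    rw [← Finset.sum_image (g := Prod.fst) (f := f) ?inj]
    case inj =>
      intro x hx y hy hxy
      have := (hmem x hx).2.2
      have := (hmem y hy).2.2
      exact Prod.ext hxy (by omega)
    refine le_trans (Finset.sum_le_sum_of_subset_of_nonneg ?_ (fun m _ _ => hfnn m)) (key N hN)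
    intro m hm
    obtain ⟨q, hq, rfl⟩ := Finset.mem_image.mp hm
    exact (hmem q hq).1
  have h2 : ∑ q ∈ pairSet N n, f q.2 ≤ B := by
    rw [← Finset.sum_image (g := Prod.snd) (f := f) ?inj]
    case inj =>
      intro x hx y hy hxy
      have := (hmem x hx).2.2
      have := (hmem y hy).2.2
      exact Prod.ext (by omega) hxy
    refine le_trans (Finset.sum_le_sum_of_subset_of_nonneg ?_ (fun m _ _ => hfnn m)) (key N hN)
    intro m hm
    obtain ⟨q, hq, rfl⟩ := Finset.mem_image.mp hm
    exact (hmem q hq).2.1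
  calc ∑ q ∈ pairSet N n, ‖phiSym q.1 + phiSym q.2‖ ^ k
          * jbr q.1 ^ (-(2 * α)) * jbr q.2 ^ (-(2 * α))
      ≤ ∑ q ∈ pairSet N n, (f q.1 + f q.2) := Finset.sum_le_sum hterm
    _ = ∑ q ∈ pairSet N n, f q.1 + ∑ q ∈ pairSet N n, f q.2 := Finset.sum_add_distrib
    _ ≤ B + B := add_le_add h1 h2
    _ = 2 * B := by ring
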